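/- Let d, e ∈ (0, 1] and define α₁ = de²/((d − e)² + e²) and α₂ = de(d − e)/((d − e)² + e²). Then α₁ ∈ [0, 1], α₂ ∈ [(1 − √2)/2, 1/2], and α₁² + α₂² ≤ 1. -/

import Mathlib

/-- For `d, e ∈ (0, 1]`, the quantities `α₁ = de²/((d-e)² + e²)` and
`α₂ = de(d-e)/((d-e)² + e²)` satisfy `α₁ ∈ [0, 1]`, `α₂ ∈ [(1-√2)/2, 1/2]` and
`α₁² + α₂² ≤ 1`. -/
theorem case_two_alpha_bounds
    (d e : ℝ) (hd : d ∈ Set.Ioc (0 : ℝ) 1) (he : e ∈ Set.Ioc (0 : ℝ) 1)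
    (α₁ α₂ : ℝ)
    (hα₁ : α₁ = d * e ^ 2 / ((d - e) ^ 2 + e ^ 2))
    (hα₂ : α₂ = d * e * (d - e) / ((d - e) ^ 2 + e ^ 2)) :
    α₁ ∈ Set.Icc (0 : ℝ) 1 ∧
      α₂ ∈ Set.Icc ((1 - Real.sqrt 2) / 2) (1 / 2 : ℝ) ∧
      α₁ ^ 2 + α₂ ^ 2 ≤ 1 := by
  obtain ⟨hd0, hd1⟩ := hd
  obtain ⟨he0, he1⟩ := he
  have hQ : (0 : ℝ) < (d - e) ^ 2 + e ^ 2 := by positivity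
  have hs2 : Real.sqrt 2 ^ 2 = 2 := Real.sq_sqrt (by norm_num)
  have hs1 : (1 : ℝ) < Real.sqrt 2 := by
    nlinarith [Real.sqrt_nonneg 2]
  refine ⟨⟨?_, ?_⟩, ⟨?_, ?_⟩, ?_⟩
  · rw [hα₁]; positivity
  · rw [hα₁, div_le_one hQ]
    nlinarith [sq_nonneg (d - e), sq_nonneg e, mul_pos he0 he0]
  · rw [hα₂, div_le_div_iff₀ (by norm_num) hQ]
    nlinarith [sq_nonneg ((Real.sqrt 2 - 1 + 2 * e) * (d - e) + e ^ 2),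
      mul_nonneg (mul_nonneg (sq_nonneg e) (sub_nonneg.2 he1))
        (by nlinarith : (0:ℝ) ≤ e + 3 - 2 * Real.sqrt 2),
      mul_pos he0 he0, sq_nonneg (d - e)]
  · rw [hα₂, div_le_div_iff₀ hQ (by norm_num)]
    nlinarith [sq_nonneg (d - 2 * e), mul_nonneg (sub_nonneg.2 hd1) (sq_nonneg e),
      mul_nonneg (mul_nonneg (sub_nonneg.2 hd1) he0.le) (sub_nonneg.2 he1)]
  · rw [hα₁, hα₂, div_pow, div_pow, ← add_div, div_le_one (by positivity)]
    have h1 : d ^ 2 * e ^ 2 ≤ (d - e) ^ 2 + e ^ 2 := by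
      nlinarith [sq_nonneg (d - e), sq_nonneg e, mul_nonneg (sub_nonneg.2 hd1) (sq_nonneg e),
        mul_nonneg (mul_nonneg hd0.le (sub_nonneg.2 hd1)) (sq_nonneg e)]
    nlinarith [sq_nonneg ((d - e) ^ 2 + e ^ 2), mul_le_mul_of_nonneg_right h1 hQ.le]
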